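/- Let δ ∈ (0,1) and define A(θ) = θδ·∫_0^1 s^{−δ}/(1+θs) ds for θ > 0. Then lim_{θ→∞} θ^{−δ}·(1 + A(θ)) = πδ/sin(πδ) = 1/sinc δ. (Since ₂F₁(1,−δ;1−δ;−θ) = 1 + A(θ) is the reciprocal of the success probability of the typical user in a Poisson cellular network, this states that ₂F₁(1,−δ;1−δ;−θ) ∼ θ^δ/sinc δ as θ → ∞.) -/

import Mathlib

open Real MeasureTheory Filter

section Aux
open Set

lemma beta_val (δ : ℝ) (h0 : 0 < δ) (h1 : δ < 1) :
    ∫ t in Ioo (0:ℝ) 1, t ^ (-δ) * (1 - t) ^ (δ - 1) = π / Real.sin (π * δ) := by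
  have h1δ : 0 < 1 - δ := by linarith
  have key : Complex.betaIntegral (1 - δ) δ =
      ((∫ t in (0:ℝ)..1, t ^ (-δ) * (1 - t) ^ (δ - 1) : ℝ) : ℂ) := by
    rw [Complex.betaIntegral, ← intervalIntegral.integral_ofReal]
    refine intervalIntegral.integral_congr fun x hx => ?_
    rw [Set.uIcc_of_le (by norm_num : (0:ℝ) ≤ 1)] at hx
    push_cast
    rw [Complex.ofReal_cpow hx.1, Complex.ofReal_cpow (by linarith [hx.2] : (0:ℝ) ≤ 1 - x)]
    push_cast
    rw [show (1:ℂ) - δ - 1 = -δ by ring]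
  have hG : Complex.Gamma (1 - δ) * Complex.Gamma δ =
      Complex.Gamma (1 - δ + δ) * Complex.betaIntegral (1 - δ) δ :=
    Complex.Gamma_mul_Gamma_eq_betaIntegral (by simpa using h1δ) (by simpa using h0)
  rw [show ((1:ℂ) - δ + δ) = 1 by ring, Complex.Gamma_one, one_mul, key] at hG
  have hG' : ((Real.Gamma (1 - δ) * Real.Gamma δ : ℝ) : ℂ) =
      ((∫ t in (0:ℝ)..1, t ^ (-δ) * (1 - t) ^ (δ - 1) : ℝ) : ℂ) := by
    rw [← hG]; push_cast [← Complex.Gamma_ofReal]; norm_num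
  have hGr := Complex.ofReal_injective hG'
  have := Real.Gamma_mul_Gamma_one_sub δ
  rw [intervalIntegral.integral_of_le (by norm_num : (0:ℝ) ≤ 1),
    MeasureTheory.integral_Ioc_eq_integral_Ioo] at hGr
  rw [← hGr, mul_comm]; exact this


lemma integrable_f (δ : ℝ) (h0 : 0 < δ) (h1 : δ < 1) :
    IntegrableOn (fun u : ℝ => u ^ (-δ) / (1 + u)) (Ioi 0) := by
  have hmeas : ∀ s : Set ℝ, MeasurableSet s → s ⊆ Ioi 0 →
      AEStronglyMeasurable (fun u : ℝ => u ^ (-δ) / (1 + u)) (volume.restrict s) := by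
    intro s hs hsub
    apply ContinuousOn.aestronglyMeasurable _ hs
    intro u hu
    have hu' : (0:ℝ) < u := hsub hu
    apply ContinuousWithinAt.div
    · exact (Real.continuousAt_rpow_const u (-δ) (Or.inl (ne_of_gt hu'))).continuousWithinAt
    · exact (continuous_const.add continuous_id).continuousWithinAt
    · positivity
  rw [← Set.Ioo_union_Ici_eq_Ioi (by norm_num : (0:ℝ) < 1)]
  apply IntegrableOn.union
  · have hint : IntegrableOn (fun u : ℝ => u ^ (-δ)) (Ioo 0 1) :=
      (intervalIntegral.integrableOn_Ioo_rpow_iff (by norm_num)).2 (by linarith)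
    apply hint.mono' (hmeas _ measurableSet_Ioo Ioo_subset_Ioi_self)
    filter_upwards [ae_restrict_mem measurableSet_Ioo] with u hu
    rw [Real.norm_eq_abs,
      abs_of_nonneg (div_nonneg (Real.rpow_nonneg hu.1.le _) (by linarith [hu.1, hu.2])),
      div_le_iff₀ (by linarith [hu.1] : (0:ℝ) < 1 + u)]
    nlinarith [Real.rpow_nonneg hu.1.le (-δ), mul_nonneg (Real.rpow_nonneg hu.1.le (-δ)) hu.1.le]
  · have hint : IntegrableOn (fun u : ℝ => u ^ (-δ - 1)) (Ici 1) := by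
      rw [integrableOn_Ici_iff_integrableOn_Ioi]
      exact integrableOn_Ioi_rpow_of_lt (by linarith) one_pos
    apply hint.mono' (hmeas _ measurableSet_Ici (fun x hx => mem_Ioi.2 (lt_of_lt_of_le one_pos (mem_Ici.1 hx))))
    filter_upwards [ae_restrict_mem measurableSet_Ici] with u hu
    have hu' : (0:ℝ) < u := lt_of_lt_of_le one_pos hu
    rw [Real.norm_eq_abs, abs_of_nonneg (by positivity),
      div_le_iff₀ (by positivity : (0:ℝ) < 1 + u), Real.rpow_sub_one (ne_of_gt hu'),
      div_mul_eq_mul_div, le_div_iff₀ hu']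
    have := Real.rpow_nonneg hu'.le (-δ)
    nlinarith


lemma cov_beta (δ : ℝ) (h0 : 0 < δ) (h1 : δ < 1) :
    ∫ u in Ioi (0:ℝ), u ^ (-δ) / (1 + u) = ∫ t in Ioo (0:ℝ) 1, t ^ (-δ) * (1 - t) ^ (δ - 1) := by
  have himg : (fun t : ℝ => t / (1 - t)) '' Ioo 0 1 = Ioi 0 := by
    ext u
    constructor
    · rintro ⟨t, ht, rfl⟩
      exact div_pos ht.1 (by linarith [ht.2])
    · intro hu
      refine ⟨u / (1 + u), ⟨div_pos hu (by linarith [mem_Ioi.1 hu]), ?_⟩, ?_⟩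
      · rw [div_lt_one (by linarith [mem_Ioi.1 hu])]; linarith [mem_Ioi.1 hu]
      · have h1u : (0:ℝ) < 1 + u := by linarith [mem_Ioi.1 hu]
        field_simp
        ring
  rw [← himg, integral_image_eq_integral_abs_deriv_smul measurableSet_Ioo
    (f' := fun t => ((1 - t) ^ 2)⁻¹) ?_ ?_]
  · refine setIntegral_congr_fun measurableSet_Ioo fun t ht => ?_
    have ht0 : (0:ℝ) < t := ht.1
    have h1t : (0:ℝ) < 1 - t := by linarith [ht.2]
    rw [smul_eq_mul, abs_of_nonneg (by positivity)]
    rw [Real.div_rpow ht0.le h1t.le, Real.rpow_neg h1t.le δ,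
      show (1:ℝ) + t / (1 - t) = (1 - t)⁻¹ by field_simp; ring,
      show δ - 1 = δ + (-1) by ring, Real.rpow_add h1t, Real.rpow_neg_one]
    field_simp
  · intro t ht
    have h1t : (1:ℝ) - t ≠ 0 := by simp only [mem_Ioo] at ht; intro h; linarith [ht.2]
    have : HasDerivAt (fun t : ℝ => t / (1 - t)) (((1 - t) ^ 2)⁻¹) t := by
      have := (hasDerivAt_id t).div ((hasDerivAt_id t).const_sub 1) h1t
      convert this using 1
      · rfl
      · rfl
      · rfl
      · simp only [id]; ring
    exact this.hasDerivWithinAt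
  · intro a ha b hb hab
    have h1a : (1:ℝ) - a ≠ 0 := by simp only [mem_Ioo] at ha; intro h; linarith [ha.2]
    have h1b : (1:ℝ) - b ≠ 0 := by simp only [mem_Ioo] at hb; intro h; linarith [hb.2]
    field_simp at hab
    linarith

lemma cov_scale (δ : ℝ) (h0 : 0 < δ) (h1 : δ < 1) (θ : ℝ) (hθ : 0 < θ) :
    ∫ s in Ioo (0:ℝ) 1, s ^ (-δ) / (1 + θ * s)
      = θ ^ (δ - 1) * ∫ u in Ioo (0:ℝ) θ, u ^ (-δ) / (1 + u) := by
  have himg : (fun u : ℝ => θ⁻¹ * u) '' Ioo 0 θ = Ioo 0 1 := by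
    rw [Set.image_mul_left_Ioo (inv_pos.2 hθ), mul_zero, inv_mul_cancel₀ (ne_of_gt hθ)]
  rw [← himg, integral_image_eq_integral_abs_deriv_smul measurableSet_Ioo
    (f' := fun _ => θ⁻¹) (fun x _ => by simpa using (HasDerivAt.const_mul θ⁻¹ (hasDerivAt_id x)).hasDerivWithinAt)
    (fun a _ b _ h => by
      have := congrArg (θ * ·) h
      simpa [← mul_assoc, mul_inv_cancel₀ (ne_of_gt hθ)] using this)]
  rw [← integral_const_mul]
  refine setIntegral_congr_fun measurableSet_Ioo fun u hu => ?_
  have hu0 : (0:ℝ) < u := hu.1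
  rw [smul_eq_mul, abs_of_nonneg (by positivity)]
  rw [show θ * (θ⁻¹ * u) = u by field_simp, show θ⁻¹ * u = u / θ by ring,
    Real.div_rpow hu0.le hθ.le, Real.rpow_neg hθ.le δ,
    show δ - 1 = δ + (-1) by ring, Real.rpow_add hθ, Real.rpow_neg_one]
  field_simp

end Aux

theorem cellular_hypergeometric_asymptotics (δ : ℝ) (hδ : δ ∈ Set.Ioo (0:ℝ) 1)
    (A : ℝ → ℝ)
    (hA : ∀ θ : ℝ, A θ = θ * δ * ∫ s in Set.Ioo (0:ℝ) 1, s ^ (-δ) / (1 + θ * s)) :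
    Tendsto (fun θ : ℝ => θ ^ (-δ) * (1 + A θ)) atTop
      (nhds (π * δ / Real.sin (π * δ))) := by
  obtain ⟨h0, h1⟩ := hδ
  set I : ℝ := ∫ u in Set.Ioi (0:ℝ), u ^ (-δ) / (1 + u) with hI
  have hIval : I = π / Real.sin (π * δ) := by
    rw [hI, cov_beta δ h0 h1, beta_val δ h0 h1]
  set J : ℝ → ℝ := fun θ => ∫ u in Set.Ioo (0:ℝ) θ, u ^ (-δ) / (1 + u) with hJ
  have hJlim : Tendsto J atTop (nhds I) := by
    refine (intervalIntegral_tendsto_integral_Ioi 0 (integrable_f δ h0 h1) tendsto_id).congr' ?_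
    filter_upwards [eventually_ge_atTop (0:ℝ)] with θ hθ
    simp only [id_eq]
    rw [intervalIntegral.integral_of_le hθ, MeasureTheory.integral_Ioc_eq_integral_Ioo]
  have hlim : Tendsto (fun θ : ℝ => θ ^ (-δ) + δ * J θ) atTop
      (nhds (0 + δ * I)) :=
    (tendsto_rpow_neg_atTop h0).add (hJlim.const_mul δ)
  rw [show (0:ℝ) + δ * I = π * δ / Real.sin (π * δ) by rw [hIval]; ring] at hlim
  refine hlim.congr' ?_
  filter_upwards [eventually_gt_atTop (0:ℝ)] with θ hθ
  rw [hA θ, cov_scale δ h0 h1 θ hθ]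
  have e1 : θ * δ * (θ ^ (δ - 1) * J θ) = δ * θ ^ δ * J θ := by
    rw [show θ * δ * (θ ^ (δ - 1) * J θ) = δ * (θ ^ (1:ℝ) * θ ^ (δ - 1)) * J θ by
      rw [Real.rpow_one]; ring, ← Real.rpow_add hθ]
    norm_num
  have hpow : θ ^ (-δ) * θ ^ δ = 1 := by
    rw [← Real.rpow_add hθ]; norm_num
  rw [e1, show θ ^ (-δ) * (1 + δ * θ ^ δ * J θ)
      = θ ^ (-δ) + δ * (θ ^ (-δ) * θ ^ δ) * J θ by ring, hpow]
  ring
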